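/- For each i ∈ {1,2,3}, the discriminant of the quadratic polynomial (det A_Σ(i))·x² − (det A_Σ(i) + det A_+(i) − det A_−(i))·x + det A_+(i) in x equals f4, i.e., (f2i + g2i)² − 4·f2i·(det A_+(i)) = f4 as polynomials in a0,...,a7, where f2i = det A_Σ(i) and g2i = det A_+(i) − det A_−(i). -/
import Mathlib


theorem discriminant_is_hyperdeterminant (a0 a1 a2 a3 a4 a5 a6 a7 : ℚ) :
    ((((a0+a4)*(a7+a3) - (a1+a5)*(a6+a2)) + (-(a0*a3) + a1*a2 + a4*a7 - a5*a6))^2 - 4 * ((a0+a4)*(a7+a3) - (a1+a5)*(a6+a2)) * (a4*a7 - a5*a6) = ((a0^2*a7^2 + a3^2*a4^2 + a5^2*a2^2 + a6^2*a1^2) + 4*(a0*a3*a5*a6 + a7*a4*a2*a1) - 2*(a0*a7*a3*a4 + a0*a7*a5*a2 + a0*a7*a6*a1 + a3*a4*a5*a2 + a3*a4*a6*a1 + a5*a2*a6*a1))) ∧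
    ((((a0+a2)*(a7+a5) - (a4+a6)*(a3+a1)) + (-(a0*a5) + a1*a4 + a2*a7 - a3*a6))^2 - 4 * ((a0+a2)*(a7+a5) - (a4+a6)*(a3+a1)) * (a2*a7 - a3*a6) = ((a0^2*a7^2 + a3^2*a4^2 + a5^2*a2^2 + a6^2*a1^2) + 4*(a0*a3*a5*a6 + a7*a4*a2*a1) - 2*(a0*a7*a3*a4 + a0*a7*a5*a2 + a0*a7*a6*a1 + a3*a4*a5*a2 + a3*a4*a6*a1 + a5*a2*a6*a1))) ∧
    ((((a0+a1)*(a7+a6) - (a2+a3)*(a5+a4)) + (-(a0*a6) + a1*a7 + a2*a4 - a3*a5))^2 - 4 * ((a0+a1)*(a7+a6) - (a2+a3)*(a5+a4)) * (a1*a7 - a3*a5) = ((a0^2*a7^2 + a3^2*a4^2 + a5^2*a2^2 + a6^2*a1^2) + 4*(a0*a3*a5*a6 + a7*a4*a2*a1) - 2*(a0*a7*a3*a4 + a0*a7*a5*a2 + a0*a7*a6*a1 + a3*a4*a5*a2 + a3*a4*a6*a1 + a5*a2*a6*a1))) := by refine ⟨by ring, by ring, by ring⟩
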